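/- Assume in addition each H_i(x,·) is strictly convex. If x₀ ∈ 𝕋^N is an equilibrium point of the critical weakly coupled system, then every critical subsolution u is strictly differentiable at x₀ in each component; i.e., the Clarke gradient ∂u_i(x₀) is a singleton for every i. -/
import Mathlib


open Set MeasureTheory Filter Topology

noncomputable section

/-- Euclidean space ℝ^N. -/
abbrev E (N : ℕ) := EuclideanSpace ℝ (Fin N)
/-- The dual of ℝ^N, representing momentum variables p (acting by p · q). -/
abbrev Dual (N : ℕ) := E N →L[ℝ] ℝ

variable {N : ℕ}

/-- ℤ^N-periodicity: a function on ℝ^N descends to the flat torus 𝕋^N. -/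
def ZPer {α : Type*} (f : E N → α) : Prop :=
  ∀ (x : E N) (k : Fin N → ℤ), f (x + (EuclideanSpace.equiv (Fin N) ℝ).symm fun i => (k i : ℝ)) = f x

/-- The Clarke generalized gradient of f at x. -/
def clarke (f : E N → ℝ) (x : E N) : Set (Dual N) :=
  convexHull ℝ {p | ∃ u : ℕ → E N, (∀ n, DifferentiableAt ℝ f (u n)) ∧
    Tendsto u atTop (𝓝 x) ∧ Tendsto (fun n => fderiv ℝ f (u n)) atTop (𝓝 p)}

/-- The viscosity superdifferential D⁺f(x): differentials of C¹ functions supertangent to f at x. -/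
def Dplus (f : E N → ℝ) (x : E N) : Set (Dual N) :=
  {p | ∃ φ : E N → ℝ, ContDiff ℝ 1 φ ∧ φ x = f x ∧ (∀ᶠ y in 𝓝 x, f y ≤ φ y) ∧ fderiv ℝ φ x = p}

/-- The viscosity subdifferential D⁻f(x): differentials of C¹ functions subtangent to f at x. -/
def Dminus (f : E N → ℝ) (x : E N) : Set (Dual N) :=
  {p | ∃ φ : E N → ℝ, ContDiff ℝ 1 φ ∧ φ x = f x ∧ (∀ᶠ y in 𝓝 x, φ y ≤ f y) ∧ fderiv ℝ φ x = p}
variable {m : ℕ}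

/-- A (critical at α = β) subsolution of the weakly coupled system: each component is
Lipschitz, periodic, and H_i(x,p) + ∑_j a_{ij} u_j(x) ≤ α for every Clarke gradient
p ∈ ∂u_i(x) (equivalent to the viscosity notion by convexity). -/
def IsSubsol (H : Fin m → E N → Dual N → ℝ) (A : Matrix (Fin m) (Fin m) ℝ) (α : ℝ)
    (u : Fin m → E N → ℝ) : Prop :=
  (∀ i, ∃ K : NNReal, LipschitzWith K (u i)) ∧ (∀ i, ZPer (u i)) ∧
  ∀ i x, ∀ p ∈ clarke (u i) x, H i x p + ∑ j, A i j * u j x ≤ α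


lemma clarke_nonempty_of_lipschitz {N : ℕ} {f : E N → ℝ} {K : NNReal}
    (hK : LipschitzWith K f) (x₀ : E N) : (clarke f x₀).Nonempty := by
  have hae : ∀ᵐ x ∂(volume : Measure (E N)), DifferentiableAt ℝ f x := hK.ae_differentiableAt
  have hsel : ∀ n : ℕ, ∃ y, dist y x₀ < 1 / (n + 1) ∧ DifferentiableAt ℝ f y := by
    intro n
    by_contra h
    push_neg at h
    have h0 : Metric.ball x₀ (1 / (n + 1)) ⊆ {y | ¬ DifferentiableAt ℝ f y} := fun y hy =>
      h y (Metric.mem_ball.1 hy)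
    have h1 : volume (Metric.ball x₀ (1 / (n + 1))) = 0 :=
      measure_mono_null h0 (by simpa [ae_iff] using hae)
    have h2 : (0:ℝ) < 1 / (n + 1) := by positivity
    exact absurd h1 (Metric.measure_ball_pos volume x₀ h2).ne'
  choose v hv hdiff using hsel
  have hvt : Tendsto v atTop (𝓝 x₀) := by
    rw [tendsto_iff_dist_tendsto_zero]
    exact squeeze_zero (fun n => dist_nonneg) (fun n => (hv n).le)
      tendsto_one_div_add_atTop_nhds_zero_nat
  have hb : ∀ n, fderiv ℝ f (v n) ∈ Metric.closedBall (0 : Dual N) K := fun n => by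
    simpa [Metric.mem_closedBall, dist_zero_right] using norm_fderiv_le_of_lipschitz ℝ hK
  obtain ⟨p, -, φ, hφ, hcv⟩ := (isCompact_closedBall (0 : Dual N) (K : ℝ)).tendsto_subseq hb
  exact ⟨p, subset_convexHull ℝ _ ⟨v ∘ φ, fun n => hdiff _, hvt.comp hφ.tendsto_atTop, hcv⟩⟩

lemma bddBelow_of_superlinear {N : ℕ} {g : Dual N → ℝ} (hg : Continuous g)
    (hsl : ∃ R : ℝ, ∀ p : Dual N, R ≤ ‖p‖ → (0:ℝ) * ‖p‖ ≤ g p) :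
    BddBelow (Set.range g) := by
  obtain ⟨R, hR⟩ := hsl
  set R' := max R 0 with hR'
  have hne : (Metric.closedBall (0 : Dual N) R').Nonempty :=
    Metric.nonempty_closedBall.2 (le_max_right _ _)
  obtain ⟨p₀, -, hp₀⟩ :=
    (isCompact_closedBall (0 : Dual N) R').exists_isMinOn hne hg.continuousOn
  refine ⟨min (g p₀) 0, ?_⟩
  rintro y ⟨p, rfl⟩
  by_cases hp : ‖p‖ ≤ R'
  · exact le_trans (min_le_left _ _)
      (hp₀ (by simpa [Metric.mem_closedBall, dist_zero_right] using hp))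
  · refine le_trans (min_le_right _ _) ?_
    simpa using hR p (le_trans (le_max_left _ _) (le_of_not_ge hp))

/-- if each H_i(x,·) is strictly convex, then every critical subsolution is
strictly differentiable at any equilibrium point x₀: each Clarke gradient ∂u_i(x₀) is a
singleton. -/
theorem strict_differentiability_at_equilibrium
    (H : Fin m → E N → Dual N → ℝ)
    (hHc : ∀ i, Continuous fun q : E N × Dual N => H i q.1 q.2)
    (hHper : ∀ i p, ZPer fun x => H i x p)
    (hconv : ∀ i x, ConvexOn ℝ Set.univ (fun p : Dual N => H i x p))
    (hsl : ∀ i x (C : ℝ), ∃ R : ℝ, ∀ p : Dual N, R ≤ ‖p‖ → C * ‖p‖ ≤ H i x p)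
    (A : Matrix (Fin m) (Fin m) ℝ)
    (hoff : ∀ i j, i ≠ j → A i j ≤ 0)
    (hrow : ∀ i, ∑ j, A i j = 0)
    (hirr : ∀ W : Finset (Fin m), W.Nonempty → W ≠ Finset.univ →
      ∃ i ∈ W, ∃ j ∉ W, A i j < 0)
    (β : ℝ) (hβ : β = sInf {α | ∃ u, IsSubsol H A α u})
    (o : Fin m → ℝ) (ho : Matrix.vecMul o A = 0) (ho1 : ∑ i, o i = 1)
    (honn : ∀ i, 0 ≤ o i)
    (u : Fin m → E N → ℝ) (hu : IsSubsol H A β u)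
    (hstrict : ∀ i x, StrictConvexOn ℝ Set.univ (fun p : Dual N => H i x p))
    (x₀ : E N)
    (hx₀ : ∑ i, o i * sInf (Set.range fun p : Dual N => H i x₀ p) = β) :
    ∀ i, ∃ p : Dual N, clarke (u i) x₀ = {p} := by
  -- o is strictly positive
  have hopos : ∀ k, 0 < o k := by
    intro k
    rcases (honn k).lt_or_eq with h | h
    · exact h
    · exfalso
      set W : Finset (Fin m) := Finset.univ.filter (fun j => 0 < o j) with hW
      have hWne : W.Nonempty := by
        by_contra hc
        rw [Finset.not_nonempty_iff_eq_empty] at hc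
        have hz : ∑ j, o j = 0 := Finset.sum_eq_zero (fun j _ => by
          by_contra hj
          have hpos : 0 < o j := lt_of_le_of_ne (honn j) (Ne.symm hj)
          have hmem : j ∈ W := by simp [hW, hpos]
          simp [hc] at hmem)
        rw [ho1] at hz; norm_num at hz
      have hWneq : W ≠ Finset.univ := by
        intro hc
        have hk : k ∈ W := hc ▸ Finset.mem_univ k
        rw [hW, Finset.mem_filter] at hk
        exact hk.2.ne' h.symm
      obtain ⟨a, haW, b, hbW, hab⟩ := hirr W hWne hWneq
      have hoa : 0 < o a := by
        rw [hW, Finset.mem_filter] at haW; exact haW.2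
      have hob : o b = 0 := by
        have hnb : ¬ 0 < o b := fun hh => hbW (by simp [hW, hh])
        linarith [honn b, not_lt.1 hnb]
      have hcol : ∑ k', o k' * A k' b = 0 := by
        simpa [Matrix.vecMul, dotProduct] using congrFun ho b
      have hterm : ∀ k' ∈ Finset.univ, o k' * A k' b ≤ 0 := by
        intro k' _
        by_cases hkb : k' = b
        · subst hkb; simp [hob]
        · exact mul_nonpos_of_nonneg_of_nonpos (honn k') (hoff _ _ hkb)
      have hz := (Finset.sum_eq_zero_iff_of_nonpos hterm).1 hcol a (Finset.mem_univ a)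
      nlinarith [mul_neg_of_pos_of_neg hoa hab]
  set s : Fin m → ℝ := fun j => sInf (Set.range fun p : Dual N => H j x₀ p) with hs
  have hbdd : ∀ j, BddBelow (Set.range fun p : Dual N => H j x₀ p) := by
    intro j
    exact bddBelow_of_superlinear ((hHc j).comp (continuous_const.prodMk continuous_id))
      (hsl j x₀ 0)
  have hlow : ∀ j q, s j ≤ H j x₀ q := fun j q => csInf_le (hbdd j) ⟨q, rfl⟩
  have hne : ∀ j, (clarke (u j) x₀).Nonempty := by
    intro j
    obtain ⟨K, hK⟩ := hu.1 j
    exact clarke_nonempty_of_lipschitz hK x₀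
  have hcle : ∀ j, s j ≤ β - ∑ j', A j j' * u j' x₀ := by
    intro j
    obtain ⟨q, hq⟩ := hne j
    have h1 := hu.2.2 j x₀ q hq
    have h2 := hlow j q
    linarith
  have hcols : ∀ j', ∑ k', o k' * A k' j' = 0 := fun j' => by
    simpa [Matrix.vecMul, dotProduct] using congrFun ho j'
  have hsumc : ∑ j, o j * (β - ∑ j', A j j' * u j' x₀) = β := by
    have h1 : ∑ j, o j * (β - ∑ j', A j j' * u j' x₀)
        = (∑ j, o j) * β - ∑ j, ∑ j', o j * (A j j' * u j' x₀) := by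
      rw [Finset.sum_mul, ← Finset.sum_sub_distrib]
      congr 1 with j
      rw [mul_sub, Finset.mul_sum]
    rw [h1, ho1, one_mul, Finset.sum_comm]
    have h2 : ∑ j', ∑ j, o j * (A j j' * u j' x₀)
        = ∑ j', (∑ j, o j * A j j') * u j' x₀ := by
      congr 1 with j'
      rw [Finset.sum_mul]
      congr 1 with j
      ring
    rw [h2]
    simp [hcols]
  have key : ∀ j, β - ∑ j', A j j' * u j' x₀ = s j := by
    have hzero : ∑ j, o j * ((β - ∑ j', A j j' * u j' x₀) - s j) = 0 := by
      have hx₀' : ∑ j, o j * s j = β := hx₀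
      have hsplit : ∑ j, o j * ((β - ∑ j', A j j' * u j' x₀) - s j)
          = (∑ j, o j * (β - ∑ j', A j j' * u j' x₀)) - ∑ j, o j * s j := by
        rw [← Finset.sum_sub_distrib]
        congr 1 with j
        ring
      rw [hsplit, hsumc, hx₀', sub_self]
    have hnn : ∀ j ∈ Finset.univ,
        0 ≤ o j * ((β - ∑ j', A j j' * u j' x₀) - s j) := fun j _ =>
      mul_nonneg (honn j) (sub_nonneg.2 (hcle j))
    intro j
    have hj := (Finset.sum_eq_zero_iff_of_nonneg hnn).1 hzero j (Finset.mem_univ j)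
    rcases mul_eq_zero.1 hj with h | h
    · exact absurd h (hopos j).ne'
    · linarith [sub_eq_zero.1 h]
  intro i
  obtain ⟨q₀, hq₀⟩ := hne i
  have hval : ∀ q ∈ clarke (u i) x₀, H i x₀ q = s i := by
    intro q hq
    have h1 := hu.2.2 i x₀ q hq
    have h2 := hlow i q
    have h3 := key i
    linarith
  refine ⟨q₀, Set.eq_singleton_iff_unique_mem.2 ⟨hq₀, ?_⟩⟩
  intro q hq
  by_contra hne'
  have h12 := (hstrict i x₀).2 (Set.mem_univ q) (Set.mem_univ q₀) hne'
    (by norm_num : (0:ℝ) < 1/2) (by norm_num : (0:ℝ) < 1/2) (by norm_num : (1/2:ℝ) + 1/2 = 1)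
  have h12' : H i x₀ ((1/2:ℝ) • q + (1/2:ℝ) • q₀)
      < 1/2 * H i x₀ q + 1/2 * H i x₀ q₀ := by simpa using h12
  rw [hval q hq, hval q₀ hq₀] at h12'
  have h13 := hlow i ((1/2:ℝ) • q + (1/2:ℝ) • q₀)
  linarith
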